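/- Let Ω be a set, f: Ω → Ω a map, G: Ω → GL(m, ℝ), and 𝒢 the associated matrix cocycle. Suppose (E(ω))_{ω∈Ω} is a family of linear subspaces of ℝ^m with G(ω) E(ω) = E(f(ω)) for all ω. Fix ω ∈ Ω, constants λ > 0, ε ∈ (0, λ), and C ≥ 1 such that for all n ≥ 0: ‖𝒢(n, ω) v‖ ≤ C e^{(λ+ε)n} ‖v‖ for all v ∈ E(ω), and ‖𝒢(n, ω)^{−1} v‖ ≤ C e^{−(λ−ε)n} ‖v‖ for all v ∈ E(fⁿω). Let d: Ω → ℝ^m satisfy d(ω') ∈ E(ω') for all ω' ∈ Ω and sup_{ω'∈Ω} ‖d(ω')‖ =: D∞ < ∞. Then for every n ≥ 1: ‖(Ψⁿ d)(ω)‖ ≤ C² D∞ · (e^{(λ−ε)} − 1)^{−1} · e^{n(λ+ε)}. -/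

import Mathlib

open Filter Topology

/-- The matrix cocycle over (Ω, f) generated by G : Ω → GL(m, ℝ):
𝒢(0, ω) = Id and 𝒢(n, ω) = G(f^{n−1}ω) ⋯ G(ω). -/
def matCocycle {Ω : Type*} {m : ℕ} (f : Ω → Ω)
    (G : Ω → Matrix.GeneralLinearGroup (Fin m) ℝ) :
    ℕ → Ω → Matrix.GeneralLinearGroup (Fin m) ℝ
  | 0, _ => 1
  | n + 1, ω => matCocycle f G n (f ω) * G ω

/-- The graph-transform operator (Ψⁿ d)(ω) = Σ_{j=1}^{n} 𝒢(n−j, f^{j}ω) d(f^{j}ω). -/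
noncomputable def graphTransform {Ω : Type*} {m : ℕ} (f : Ω → Ω)
    (G : Ω → Matrix.GeneralLinearGroup (Fin m) ℝ) (d : Ω → (Fin m → ℝ))
    (n : ℕ) (ω : Ω) : Fin m → ℝ :=
  ∑ j ∈ Finset.Icc 1 n,
    ((matCocycle f G (n - j) (f^[j] ω) : Matrix (Fin m) (Fin m) ℝ)).mulVec (d (f^[j] ω))

/-- pointwise growth bound for the graph transform along an
equivariant family of subspaces with Lyapunov exponent λ > 0, fluctuation
constant C and leakage rate ε: ‖(Ψⁿ d)(ω)‖ ≤ C² D∞ (e^{λ−ε} − 1)⁻¹ e^{(λ+ε)n}. -/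
lemma matCocycle_add {Ω : Type*} {m : ℕ} (f : Ω → Ω)
    (G : Ω → Matrix.GeneralLinearGroup (Fin m) ℝ) (j k : ℕ) (ω : Ω) :
    matCocycle f G (k + j) ω
      = matCocycle f G k (f^[j] ω) * matCocycle f G j ω := by
  induction j generalizing ω with
  | zero => simp [matCocycle]
  | succ j ih =>
      have : k + (j + 1) = (k + j) + 1 := by ring
      rw [this]
      show matCocycle f G (k + j) (f ω) * G ω = _
      rw [ih (f ω)]
      rw [Function.iterate_succ_apply]
      rw [mul_assoc]
      rfl

lemma matCocycle_map_E {Ω : Type*} {m : ℕ} (f : Ω → Ω)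
    (G : Ω → Matrix.GeneralLinearGroup (Fin m) ℝ)
    (E : Ω → Submodule ℝ (Fin m → ℝ))
    (hE : ∀ ω' : Ω,
      Submodule.map ((G ω' : Matrix (Fin m) (Fin m) ℝ)).mulVecLin (E ω') = E (f ω'))
    (j : ℕ) (ω : Ω) :
    Submodule.map ((matCocycle f G j ω : Matrix (Fin m) (Fin m) ℝ)).mulVecLin (E ω)
      = E (f^[j] ω) := by
  induction j generalizing ω with
  | zero =>
      simp [matCocycle, Matrix.mulVecLin_one]
  | succ j ih =>
      show Submodule.map
        ((↑(matCocycle f G j (f ω) * G ω) : Matrix (Fin m) (Fin m) ℝ)).mulVecLin (E ω) = _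
      rw [Matrix.GeneralLinearGroup.coe_mul, Matrix.mulVecLin_mul,
        Submodule.map_comp]
      rw [hE ω, ih (f ω), Function.iterate_succ_apply]

theorem graphTransform_growth_pointwise {Ω : Type*} {m : ℕ} (f : Ω → Ω)
    (G : Ω → Matrix.GeneralLinearGroup (Fin m) ℝ)
    (E : Ω → Submodule ℝ (Fin m → ℝ))
    (hE : ∀ ω' : Ω,
      Submodule.map ((G ω' : Matrix (Fin m) (Fin m) ℝ)).mulVecLin (E ω') = E (f ω'))
    (ω : Ω) (lam ε Cc : ℝ) (hlam : 0 < lam) (hε0 : 0 < ε) (hεlam : ε < lam) (hCc : 1 ≤ Cc)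
    (hup : ∀ n : ℕ, ∀ v ∈ E ω,
      ‖((matCocycle f G n ω : Matrix (Fin m) (Fin m) ℝ)).mulVec v‖
        ≤ Cc * Real.exp ((lam + ε) * n) * ‖v‖)
    (hdown : ∀ n : ℕ, ∀ v ∈ E (f^[n] ω),
      ‖(((matCocycle f G n ω)⁻¹ : Matrix (Fin m) (Fin m) ℝ)).mulVec v‖
        ≤ Cc * Real.exp (-(lam - ε) * n) * ‖v‖)
    (d : Ω → (Fin m → ℝ)) (hdE : ∀ ω' : Ω, d ω' ∈ E ω')
    (Dinf : ℝ) (hDinf : ∀ ω' : Ω, ‖d ω'‖ ≤ Dinf) :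
    ∀ n : ℕ, 1 ≤ n →
      ‖graphTransform f G d n ω‖
        ≤ Cc ^ 2 * Dinf * (Real.exp (lam - ε) - 1)⁻¹ * Real.exp ((lam + ε) * n) := by
  intro n hn
  have hDnn : 0 ≤ Dinf := le_trans (norm_nonneg _) (hDinf ω)
  have ha : 0 < lam - ε := by linarith
  set r : ℝ := Real.exp (-(lam - ε)) with hr
  have hr0 : 0 < r := Real.exp_pos _
  have hr1 : r < 1 := by
    rw [hr]; exact Real.exp_lt_one_iff.mpr (by linarith)
  -- pointwise bound on each summand
  have key : ∀ j ∈ Finset.Icc 1 n,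
      ‖((matCocycle f G (n - j) (f^[j] ω) : Matrix (Fin m) (Fin m) ℝ)).mulVec (d (f^[j] ω))‖
        ≤ Cc ^ 2 * Dinf * Real.exp ((lam + ε) * n) * r ^ j := by
    intro j hj
    obtain ⟨hj1, hjn⟩ := Finset.mem_Icc.mp hj
    set v : Fin m → ℝ :=
      (((matCocycle f G j ω)⁻¹ : Matrix (Fin m) (Fin m) ℝ)).mulVec (d (f^[j] ω)) with hv
    have hvE : v ∈ E ω := by
      have hmem : d (f^[j] ω) ∈ E (f^[j] ω) := hdE _
      rw [← matCocycle_map_E f G E hE j ω] at hmem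
      obtain ⟨u, hu, huv⟩ := hmem
      have : v = u := by
        rw [hv, ← huv]
        simp only [Matrix.mulVecLin_apply, Matrix.mulVec_mulVec]
        have hcoe : ((matCocycle f G j ω : Matrix (Fin m) (Fin m) ℝ))⁻¹
            = ((↑((matCocycle f G j ω)⁻¹) : Matrix (Fin m) (Fin m) ℝ)) :=
          (Matrix.coe_units_inv _).symm
        rw [hcoe, ← Matrix.GeneralLinearGroup.coe_mul, inv_mul_cancel,
          Matrix.GeneralLinearGroup.coe_one, Matrix.one_mulVec]
      rw [this]; exact hu
    have hveq :
        ((matCocycle f G (n - j) (f^[j] ω) : Matrix (Fin m) (Fin m) ℝ)).mulVec (d (f^[j] ω))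
        = ((matCocycle f G n ω : Matrix (Fin m) (Fin m) ℝ)).mulVec v := by
      rw [hv, Matrix.mulVec_mulVec]
      congr 1
      have hsplit : matCocycle f G n ω
          = matCocycle f G (n - j) (f^[j] ω) * matCocycle f G j ω := by
        have : n = (n - j) + j := (Nat.sub_add_cancel hjn).symm
        rw [this, matCocycle_add]
        rw [← this]
      have hcoe : ((matCocycle f G j ω : Matrix (Fin m) (Fin m) ℝ))⁻¹
          = ((↑((matCocycle f G j ω)⁻¹) : Matrix (Fin m) (Fin m) ℝ)) :=
        (Matrix.coe_units_inv _).symm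
      rw [hsplit, Matrix.GeneralLinearGroup.coe_mul, mul_assoc, hcoe,
        ← Matrix.GeneralLinearGroup.coe_mul, mul_inv_cancel,
        Matrix.GeneralLinearGroup.coe_one, mul_one]
    rw [hveq]
    have h1 := hup n v hvE
    have h2 := hdown j (d (f^[j] ω)) (hdE _)
    have hnv : ‖v‖ ≤ Cc * Real.exp (-(lam - ε) * j) * Dinf := by
      refine le_trans h2 ?_
      have := hDinf (f^[j] ω)
      have hpos : 0 < Cc * Real.exp (-(lam - ε) * j) :=
        mul_pos (lt_of_lt_of_le one_pos hCc) (Real.exp_pos _)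
      nlinarith [Real.exp_pos (-(lam - ε) * ↑j)]
    have hrj : Real.exp (-(lam - ε) * j) = r ^ j := by
      rw [hr, ← Real.exp_nat_mul]; ring_nf
    calc ‖((matCocycle f G n ω : Matrix (Fin m) (Fin m) ℝ)).mulVec v‖
        ≤ Cc * Real.exp ((lam + ε) * n) * ‖v‖ := h1
      _ ≤ Cc * Real.exp ((lam + ε) * n) * (Cc * Real.exp (-(lam - ε) * j) * Dinf) := by
          apply mul_le_mul_of_nonneg_left hnv
          positivity
      _ = Cc ^ 2 * Dinf * Real.exp ((lam + ε) * n) * r ^ j := by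
          rw [hrj]; ring
  have hsum : ‖graphTransform f G d n ω‖
      ≤ ∑ j ∈ Finset.Icc 1 n,
          Cc ^ 2 * Dinf * Real.exp ((lam + ε) * n) * r ^ j := by
    refine le_trans (norm_sum_le _ _) ?_
    exact Finset.sum_le_sum key
  rw [← Finset.mul_sum] at hsum
  have hgeom : ∑ j ∈ Finset.Icc 1 n, r ^ j ≤ (Real.exp (lam - ε) - 1)⁻¹ := by
    have h1 : ∑ j ∈ Finset.Icc 1 n, r ^ j = r * ∑ i ∈ Finset.range n, r ^ i := by
      rw [← Finset.Ico_add_one_right_eq_Icc, Finset.sum_Ico_eq_sum_range]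
      simp only [Nat.add_sub_cancel, pow_add, pow_one, Nat.succ_sub_one]
      rw [Finset.mul_sum]
    have h2 : ∑ i ∈ Finset.range n, r ^ i ≤ (1 - r)⁻¹ := by
      refine le_trans (Summable.sum_le_tsum (Finset.range n)
        (fun i _ => le_of_lt (pow_pos hr0 i))
        (summable_geometric_of_lt_one hr0.le hr1)) ?_
      exact le_of_eq (tsum_geometric_of_lt_one hr0.le hr1)
    have h3 : r * (1 - r)⁻¹ = (Real.exp (lam - ε) - 1)⁻¹ := by
      have he : Real.exp (lam - ε) = r⁻¹ := by
        rw [hr, ← Real.exp_neg, neg_neg]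
      rw [he]
      have h1r : (0:ℝ) < 1 - r := by linarith
      have hrne : r ≠ 0 := ne_of_gt hr0
      rw [eq_comm, inv_eq_iff_eq_inv, mul_inv, inv_inv]
      field_simp
    calc ∑ j ∈ Finset.Icc 1 n, r ^ j = r * ∑ i ∈ Finset.range n, r ^ i := h1
      _ ≤ r * (1 - r)⁻¹ := mul_le_mul_of_nonneg_left h2 hr0.le
      _ = (Real.exp (lam - ε) - 1)⁻¹ := h3
  calc ‖graphTransform f G d n ω‖
      ≤ Cc ^ 2 * Dinf * Real.exp ((lam + ε) * n) * ∑ j ∈ Finset.Icc 1 n, r ^ j := hsum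
    _ ≤ Cc ^ 2 * Dinf * Real.exp ((lam + ε) * n) * (Real.exp (lam - ε) - 1)⁻¹ := by
        apply mul_le_mul_of_nonneg_left hgeom
        positivity
    _ = Cc ^ 2 * Dinf * (Real.exp (lam - ε) - 1)⁻¹ * Real.exp ((lam + ε) * n) := by ring
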